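/- Let A = [[√2, 1/2],[1/2, √2]] and C² have (1,1) entry 16/9 (where C = |(1/3)[[4, 2√2],[0,5]]|). Then there exists a positive real t such that the inequality A ≤ (1/(2t)) C² + (t/2)·I fails; specifically √2 > 8/(9t) + t/2 for t = 4/3. -/

import Mathlib

open Matrix
open scoped ComplexOrder

noncomputable def matA : Matrix (Fin 2) (Fin 2) ℂ :=
  !![(Real.sqrt 2 : ℂ), 1/2; 1/2, (Real.sqrt 2 : ℂ)]

noncomputable def matY : Matrix (Fin 2) (Fin 2) ℂ :=
  (3 : ℂ)⁻¹ • !![4, (2 * Real.sqrt 2 : ℂ); 0, 5]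

/-- `C² = Yᴴ Y` where `C = |Y|`. -/
noncomputable def matCsq : Matrix (Fin 2) (Fin 2) ℂ := matYᴴ * matY

lemma aux_csq00 : matCsq 0 0 = (16 / 9 : ℂ) := by
  simp [matCsq, matY, Matrix.mul_apply, Fin.sum_univ_two, Matrix.conjTranspose_apply]
  rw [show ((starRingEnd ℂ) 3) = 3 by norm_num [Complex.ext_iff],
    show ((starRingEnd ℂ) 4) = 4 by norm_num [Complex.ext_iff]]
  norm_num

lemma aux_sqrt : (4 / 3 : ℝ) < Real.sqrt 2 := by
  rw [show (4/3 : ℝ) = Real.sqrt ((4/3)^2) by rw [Real.sqrt_sq]; norm_num]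
  apply Real.sqrt_lt_sqrt <;> norm_num

theorem stmt12 :
    matCsq 0 0 = (16 / 9 : ℂ) ∧
      (∃ t : ℝ, 0 < t ∧
        ¬ (((1 / (2 * t) : ℂ) • matCsq + ((t / 2 : ℝ) : ℂ) • (1 : Matrix (Fin 2) (Fin 2) ℂ))
            - matA).PosSemidef) ∧
      Real.sqrt 2 > 8 / (9 * (4 / 3 : ℝ)) + (4 / 3 : ℝ) / 2 := by
  refine ⟨aux_csq00, ⟨4/3, by norm_num, ?_⟩, ?_⟩
  · intro h
    have h00 := h.dotProduct_mulVec_nonneg (Pi.single 0 1)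
    have hval : (((1 / (2 * (4/3 : ℝ)) : ℂ) • matCsq + (((4/3 : ℝ) / 2 : ℝ) : ℂ) •
        (1 : Matrix (Fin 2) (Fin 2) ℂ)) - matA) 0 0 = ((4/3 - Real.sqrt 2 : ℝ) : ℂ) := by
      simp [aux_csq00, matA, Matrix.sub_apply, Matrix.add_apply, Matrix.smul_apply,
        Matrix.one_apply]
      ring
    have key : ∀ (N : Matrix (Fin 2) (Fin 2) ℂ),
        star (Pi.single 0 1) ⬝ᵥ N *ᵥ Pi.single 0 1 = N 0 0 := by
      intro N
      simp [dotProduct, Matrix.mulVec, Fin.sum_univ_two, Pi.single_apply]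
    rw [key, hval] at h00
    have : (0:ℝ) ≤ 4/3 - Real.sqrt 2 := by
      have := Complex.zero_le_real.mp h00
      linarith [this]
    linarith [aux_sqrt]
  · have := aux_sqrt
    norm_num
    linarith
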